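/- Let E be a real inner product space and F : E → ℝ be differentiable with gradient ∇F that is L-Lipschitz, and suppose F is bounded below by F*. Let η > 0, let w : ℕ → E, Δ : ℕ → E, e : ℕ → E satisfy w(r+1) = w(r) + η·Δ(r) and Δ(r) = −(∇F(w(r)) + e(r)) for all r, and let ε : ℕ → ℝ satisfy ‖e(r)‖ ≤ ε(r). Then for every R ≥ 1, (1/R)·Σ_{r=0}^{R−1} ‖∇F(w(r))‖² ≤ (F(w(0)) − F*)/(η·R) + (L·η/(2R))·Σ_{r=0}^{R−1} ‖Δ(r)‖² + (1/R)·Σ_{r=0}^{R−1} ‖∇F(w(r))‖·ε(r). (This is the telescoped averaged-gradient bound, Eq. (13), in the deterministic form with exact per-round coefficients.) -/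

import Mathlib

open RealInnerProductSpace

lemma descent_lemma
    {E : Type*} [NormedAddCommGroup E] [InnerProductSpace ℝ E] [CompleteSpace E]
    (F : E → ℝ) (F' : E → E) (L : ℝ)
    (hgrad : ∀ x, HasGradientAt F (F' x) x)
    (hlip : ∀ x y, ‖F' x - F' y‖ ≤ L * ‖x - y‖)
    (x v : E) :
    F (x + v) ≤ F x + ⟪F' x, v⟫ + L / 2 * ‖v‖ ^ 2 := by
  set h : ℝ → ℝ := fun t => F (x + t • v) - t * ⟪F' x, v⟫ - L * ‖v‖ ^ 2 * t ^ 2 / 2 with hh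
  have hderiv : ∀ t : ℝ, HasDerivAt h
      (⟪F' (x + t • v), v⟫ - ⟪F' x, v⟫ - L * ‖v‖ ^ 2 * t) t := by
    intro t
    have hc : HasDerivAt (fun t : ℝ => x + t • v) v t := by
      simpa using ((hasDerivAt_id t).smul_const v).const_add x
    have hF : HasFDerivAt F ((InnerProductSpace.toDual ℝ E) (F' (x + t • v))) (x + t • v) :=
      (hasGradientAt_iff_hasFDerivAt).mp (hgrad _)
    have h1 : HasDerivAt (fun t : ℝ => F (x + t • v)) ⟪F' (x + t • v), v⟫ t := by
      have h := hF.comp_hasDerivAt t hc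
      simp at h
      exact h
    have h2 : HasDerivAt (fun t : ℝ => t * ⟪F' x, v⟫) ⟪F' x, v⟫ t := by
      simpa using (hasDerivAt_id t).mul_const (⟪F' x, v⟫)
    have h3 : HasDerivAt (fun t : ℝ => L * ‖v‖ ^ 2 * t ^ 2 / 2) (L * ‖v‖ ^ 2 * t) t := by
      have := ((hasDerivAt_pow 2 t).const_mul (L * ‖v‖ ^ 2)).div_const 2
      simpa using this.congr_deriv (by ring)
    exact (h1.sub h2).sub h3
  have hanti : AntitoneOn h (Set.Icc (0:ℝ) 1) := by
    apply antitoneOn_of_deriv_nonpos (convex_Icc 0 1)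
    · exact fun t _ => (hderiv t).continuousAt.continuousWithinAt
    · exact fun t _ => (hderiv t).differentiableAt.differentiableWithinAt
    · intro t ht
      rw [interior_Icc] at ht
      rw [(hderiv t).deriv]
      have key : ⟪F' (x + t • v) - F' x, v⟫ ≤ L * ‖v‖ ^ 2 * t := by
        calc ⟪F' (x + t • v) - F' x, v⟫ ≤ ‖F' (x + t • v) - F' x‖ * ‖v‖ :=
              real_inner_le_norm _ _
          _ ≤ (L * ‖(x + t • v) - x‖) * ‖v‖ :=
              mul_le_mul_of_nonneg_right (hlip _ _) (norm_nonneg v)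
          _ = L * ‖v‖ ^ 2 * t := by
              rw [add_sub_cancel_left, norm_smul, Real.norm_eq_abs,
                abs_of_pos ht.1]; ring
      rw [inner_sub_left] at key
      linarith
  have := hanti (Set.left_mem_Icc.mpr zero_le_one) (Set.right_mem_Icc.mpr zero_le_one) zero_le_one
  simp only [hh, zero_smul, add_zero, one_smul, zero_mul, sub_zero, zero_pow, mul_zero,
    zero_div, one_pow, mul_one, one_mul] at this
  linarith


/-- **Telescoped averaged-gradient bound (Eq. (13), deterministic form)**:
for iterates `w (r+1) = w r + η • Δ r` with `Δ r = -(∇F (w r) + e r)` and `‖e r‖ ≤ ε r`,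
the average of `‖∇F (w r)‖²` over `r < R` is bounded by
`(F (w 0) - F*)/(ηR) + (Lη/(2R)) Σ ‖Δ r‖² + (1/R) Σ ‖∇F (w r)‖ · ε r`. -/
theorem telescoped_averaged_gradient_bound
    {E : Type*} [NormedAddCommGroup E] [InnerProductSpace ℝ E] [CompleteSpace E]
    (F : E → ℝ) (F' : E → E) (L : ℝ) (Fstar : ℝ)
    (hgrad : ∀ x, HasGradientAt F (F' x) x)
    (hlip : ∀ x y, ‖F' x - F' y‖ ≤ L * ‖x - y‖)
    (hbdd : ∀ x, Fstar ≤ F x)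
    (η : ℝ) (hη : 0 < η)
    (w Δ e : ℕ → E) (ε : ℕ → ℝ)
    (hupd : ∀ r, w (r + 1) = w r + η • Δ r)
    (hΔ : ∀ r, Δ r = -(F' (w r) + e r))
    (herr : ∀ r, ‖e r‖ ≤ ε r)
    (R : ℕ) (hR : 1 ≤ R) :
    (1 / (R : ℝ)) * ∑ r ∈ Finset.range R, ‖F' (w r)‖ ^ 2 ≤
      (F (w 0) - Fstar) / (η * R)
        + (L * η / (2 * R)) * ∑ r ∈ Finset.range R, ‖Δ r‖ ^ 2
        + (1 / (R : ℝ)) * ∑ r ∈ Finset.range R, ‖F' (w r)‖ * ε r := by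

  have step : ∀ r, F (w (r + 1)) - F (w r) ≤
      -(η * ‖F' (w r)‖ ^ 2) + L * η ^ 2 / 2 * ‖Δ r‖ ^ 2 + η * (‖F' (w r)‖ * ε r) := by
    intro r
    have hd := descent_lemma F F' L hgrad hlip (w r) (η • Δ r)
    rw [← hupd r] at hd
    have hinner : ⟪F' (w r), η • Δ r⟫ = η * (-‖F' (w r)‖ ^ 2 - ⟪F' (w r), e r⟫) := by
      rw [hΔ r, real_inner_smul_right, inner_neg_right, inner_add_right,
        real_inner_self_eq_norm_sq]
      ring
    have hcs : -⟪F' (w r), e r⟫ ≤ ‖F' (w r)‖ * ε r := by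
      have h1 : -⟪F' (w r), e r⟫ ≤ ‖F' (w r)‖ * ‖e r‖ := by
        have := real_inner_le_norm (F' (w r)) (-(e r))
        rwa [inner_neg_right, norm_neg] at this
      exact h1.trans (mul_le_mul_of_nonneg_left (herr r) (norm_nonneg _))
    have hnorm : ‖η • Δ r‖ ^ 2 = η ^ 2 * ‖Δ r‖ ^ 2 := by
      rw [norm_smul, Real.norm_eq_abs, mul_pow, sq_abs]
    rw [hinner, hnorm] at hd
    nlinarith [hd, mul_le_mul_of_nonneg_left hcs hη.le]
  have tele : F (w R) - F (w 0) =
      ∑ r ∈ Finset.range R, (F (w (r + 1)) - F (w r)) :=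
    (Finset.sum_range_sub (f := fun r => F (w r)) R).symm
  have hsum : F (w R) - F (w 0) ≤
      ∑ r ∈ Finset.range R, (-(η * ‖F' (w r)‖ ^ 2) + L * η ^ 2 / 2 * ‖Δ r‖ ^ 2
        + η * (‖F' (w r)‖ * ε r)) := by
    rw [tele]; exact Finset.sum_le_sum fun r _ => step r
  have hsplit : ∑ r ∈ Finset.range R, (-(η * ‖F' (w r)‖ ^ 2) + L * η ^ 2 / 2 * ‖Δ r‖ ^ 2
      + η * (‖F' (w r)‖ * ε r)) = -(η * ∑ r ∈ Finset.range R, ‖F' (w r)‖ ^ 2)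
      + L * η ^ 2 / 2 * ∑ r ∈ Finset.range R, ‖Δ r‖ ^ 2
      + η * ∑ r ∈ Finset.range R, ‖F' (w r)‖ * ε r := by
    simp [Finset.sum_add_distrib, Finset.mul_sum]
  rw [hsplit] at hsum
  have key : η * ∑ r ∈ Finset.range R, ‖F' (w r)‖ ^ 2 ≤
      (F (w 0) - Fstar) + L * η ^ 2 / 2 * ∑ r ∈ Finset.range R, ‖Δ r‖ ^ 2
        + η * ∑ r ∈ Finset.range R, ‖F' (w r)‖ * ε r := by
    have := hbdd (w R); linarith
  have hRpos : (0 : ℝ) < (R : ℝ) := by exact_mod_cast hR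
  have hηR : (0 : ℝ) < η * R := mul_pos hη hRpos
  calc (1 / (R : ℝ)) * ∑ r ∈ Finset.range R, ‖F' (w r)‖ ^ 2
      = (η * ∑ r ∈ Finset.range R, ‖F' (w r)‖ ^ 2) / (η * R) := by
        field_simp
    _ ≤ ((F (w 0) - Fstar) + L * η ^ 2 / 2 * ∑ r ∈ Finset.range R, ‖Δ r‖ ^ 2
        + η * ∑ r ∈ Finset.range R, ‖F' (w r)‖ * ε r) / (η * R) := by
        gcongr
    _ = (F (w 0) - Fstar) / (η * R)
        + (L * η / (2 * R)) * ∑ r ∈ Finset.range R, ‖Δ r‖ ^ 2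
        + (1 / (R : ℝ)) * ∑ r ∈ Finset.range R, ‖F' (w r)‖ * ε r := by
        field_simp
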